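/- Fix an integer k ≥ 1. For each integer n ≥ 1 let t₀^{(k)}(n) be the unique complex solution of t e^t = n i/(2πk) with 0 < Im t < π. Then t₀^{(k)}(n) = log(n/(2πk)) − log log n + (π/2) i + O(log log n / log n) as n → ∞; that is, |t₀^{(k)}(n) − (log(n/(2πk)) − log log n + (π/2)i)| ≤ C · (log log n)/(log n) for some constant C and all sufficiently large n. -/

import Mathlib

open Complex Real Filter Topology

private lemma aux_exp_neg_le {u : ℝ} (h0 : 0 ≤ u) (h2 : u ≤ 1/2) :
    Real.exp (-(2*u)) ≤ 1 - u := by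
  have h5 := Real.add_one_le_exp (2*u)
  have h6 : Real.exp (-(2*u)) * Real.exp (2*u) = 1 := by
    rw [← Real.exp_add]; simp
  nlinarith [Real.exp_pos (2*u), Real.exp_pos (-(2*u))]

private lemma aux_log_one_sub {u : ℝ} (h0 : 0 ≤ u) (h2 : u ≤ 1/2) :
    -(2*u) ≤ Real.log (1 - u) := by
  rw [Real.le_log_iff_exp_le (by linarith : (0:ℝ) < 1 - u)]
  exact aux_exp_neg_le h0 h2

private lemma aux_neg_mul_exp_le (x : ℝ) : (-x) * Real.exp x ≤ 1 := by
  rcases le_or_gt x 0 with h | h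
  · have h3 := Real.add_one_le_exp (-x)
    have h4 : Real.exp (-x) * Real.exp x = 1 := by rw [← Real.exp_add]; simp
    nlinarith [Real.exp_pos x]
  · nlinarith [Real.exp_pos x]

private lemma aux_log_le_div5 {l : ℝ} (h : 100 ≤ l) : Real.log l ≤ l/5 := by
  have hl0 : (0:ℝ) < l := by linarith
  have hsq : (10:ℝ) ≤ Real.sqrt l := by
    have h1 : Real.sqrt 100 ≤ Real.sqrt l := Real.sqrt_le_sqrt h
    rwa [show (100:ℝ) = 10^2 by norm_num,
      Real.sqrt_sq (by norm_num : (0:ℝ) ≤ 10)] at h1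
  have hsq2 : Real.sqrt l * Real.sqrt l = l := Real.mul_self_sqrt (le_of_lt hl0)
  have h1 : Real.log l = 2 * Real.log (Real.sqrt l) := by
    rw [Real.log_sqrt (le_of_lt hl0)]; ring
  have h2 : Real.log (Real.sqrt l) ≤ Real.sqrt l - 1 :=
    Real.log_le_sub_one_of_pos (by linarith)
  have h3 : Real.sqrt l ≤ l/10 := by nlinarith
  rw [h1]; linarith

set_option maxHeartbeats 1000000 in
theorem saddle_asymptotics (k : ℕ) (hk : 1 ≤ k) (t₀ : ℕ → ℂ)
    (ht₀ : ∀ n : ℕ, 1 ≤ n → (0 < (t₀ n).im ∧ (t₀ n).im < π ∧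
      t₀ n * Complex.exp (t₀ n) = n * Complex.I / (2 * π * k))) :
    ∃ C : ℝ, ∃ N : ℕ, ∀ n : ℕ, N ≤ n →
      ‖t₀ n -
        ((Real.log (n / (2 * π * k)) : ℂ) - (Real.log (Real.log n) : ℂ) +
          (π / 2 : ℝ) * Complex.I)‖ ≤
      C * (Real.log (Real.log n) / Real.log n) := by
  have hπ : (0:ℝ) < π := Real.pi_pos
  have hπ4 : π < 4 := by linarith [Real.pi_lt_d2]
  have hπ3 : 3 < π := Real.pi_gt_three
  have hk1 : (1:ℝ) ≤ (k:ℝ) := by exact_mod_cast hk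
  have hd : (0:ℝ) < 2*π*k := by nlinarith
  set c : ℝ := Real.log (2*π*(k:ℝ)) with hc_def
  have he1 : Real.exp 1 < 3 := by
    have := Real.exp_one_lt_d9
    linarith
  have hc1 : 1 ≤ c := by
    rw [hc_def, Real.le_log_iff_exp_le hd]
    nlinarith
  refine ⟨2*c + 20, ⌈Real.exp (4*c + 100)⌉₊ + 1, ?_⟩
  intro n hn
  have hn1 : 1 ≤ n := le_trans (Nat.le_add_left 1 _) hn
  have hn0 : (0:ℝ) < n := by exact_mod_cast hn1
  obtain ⟨hy0, hyπ, heq⟩ := ht₀ n hn1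
  set t := t₀ n with ht_def
  set x := t.re with hx_def
  set y := t.im with hy_def
  set ℓ := Real.log n with hl_def
  have h_exp_le : Real.exp (4*c+100) ≤ (n:ℝ) := by
    have h1 : Real.exp (4*c+100) ≤ (⌈Real.exp (4*c+100)⌉₊ : ℝ) := Nat.le_ceil _
    have h2 : ((⌈Real.exp (4*c+100)⌉₊ : ℕ) : ℝ) ≤ (n:ℝ) := by
      exact_mod_cast le_trans (Nat.le_succ _) hn
    linarith
  have hl_big : 4*c + 100 ≤ ℓ := by
    rw [hl_def, Real.le_log_iff_exp_le hn0]; exact h_exp_le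
  have hl100 : 100 ≤ ℓ := by linarith
  have hl0 : (0:ℝ) < ℓ := by linarith
  have hcl : c ≤ ℓ/4 := by linarith
  set R : ℝ := (n:ℝ)/(2*π*k) with hR_def
  have hR0 : 0 < R := by positivity
  have hlogR : Real.log R = ℓ - c := by
    rw [hR_def, Real.log_div (ne_of_gt hn0) (ne_of_gt hd), hl_def, hc_def]
  have heq' : t * Complex.exp t = (R:ℂ) * Complex.I := by
    rw [heq, hR_def]; push_cast; ring
  have hE1 : ‖t‖ * Real.exp x = R := by
    have h : ‖t * Complex.exp t‖ = ‖(R:ℂ) * Complex.I‖ := by rw [heq']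
    rwa [norm_mul, Complex.norm_exp, norm_mul, Complex.norm_I, Complex.norm_real,
      Real.norm_eq_abs, abs_of_pos hR0, mul_one] at h
  have hre0 : x * (Real.exp x * Real.cos y) - y * (Real.exp x * Real.sin y) = 0 := by
    have h := congrArg Complex.re heq'
    simpa [Complex.mul_re, Complex.exp_re, Complex.exp_im] using h
  have hxy : x * Real.cos y = y * Real.sin y := by
    have hex := Real.exp_pos x
    have h2 : (x * Real.cos y - y * Real.sin y) * Real.exp x = 0 := by
      linear_combination hre0
    rcases mul_eq_zero.mp h2 with h | h
    · linarith
    · exact absurd h (ne_of_gt hex)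
  have hsin : 0 < Real.sin y := Real.sin_pos_of_pos_of_lt_pi hy0 hyπ
  have hR_exp : R = Real.exp (ℓ - c) := by rw [← hlogR, Real.exp_log hR0]
  have hR_big : (ℓ - c) + 1 ≤ R := by
    rw [hR_exp]; linarith [Real.add_one_le_exp (ℓ - c)]
  have habs_bd : ‖t‖ ≤ |x| + π := by
    have h1 := Complex.norm_le_abs_re_add_abs_im t
    have h2 : |y| ≤ π := by rw [abs_of_pos hy0]; exact le_of_lt hyπ
    rw [← hx_def, ← hy_def] at h1
    linarith
  have hx0 : 0 < x := by
    by_contra h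
    push_neg at h
    have hx' : |x| = -x := abs_of_nonpos h
    rw [hx'] at habs_bd
    have hexp1 : Real.exp x ≤ 1 := Real.exp_le_one_iff.mpr h
    have hep := Real.exp_pos x
    have h1 : R ≤ (-x + π) * Real.exp x := by
      rw [← hE1]
      exact mul_le_mul_of_nonneg_right habs_bd (le_of_lt hep)
    have h2 : (-x) * Real.exp x ≤ 1 := aux_neg_mul_exp_le x
    have hsplit : (-x + π) * Real.exp x = (-x) * Real.exp x + π * Real.exp x := by
      ring
    have h6 : π * Real.exp x ≤ π := mul_le_of_le_one_right (le_of_lt hπ) hexp1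
    linarith
  have hcos : 0 < Real.cos y := by
    by_contra h
    push_neg at h
    have h1 : x * Real.cos y ≤ 0 :=
      mul_nonpos_of_nonneg_of_nonpos (le_of_lt hx0) h
    have h2 : 0 < y * Real.sin y := mul_pos hy0 hsin
    linarith
  have hy2 : y < π/2 := by
    by_contra h
    push_neg at h
    have := Real.cos_nonpos_of_pi_div_two_le_of_le h (by linarith)
    linarith
  have htan : Real.tan y = x / y := by
    rw [Real.tan_eq_sin_div_cos]
    rw [div_eq_div_iff (ne_of_gt hcos) (ne_of_gt hy0)]
    linear_combination -hxy
  have ht_ne0 : t ≠ 0 := by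
    intro h
    rw [hy_def, h] at hy0
    simp at hy0
  have habs_pos : 0 < ‖t‖ := norm_pos_iff.mpr ht_ne0
  have hlog_eq : Real.log (‖t‖) + x = ℓ - c := by
    have h := congrArg Real.log hE1
    rwa [Real.log_mul (ne_of_gt habs_pos) (ne_of_gt (Real.exp_pos x)), Real.log_exp,
      hlogR] at h
  have habs_ub : ‖t‖ ≤ x + π := by
    rw [abs_of_pos hx0] at habs_bd; exact habs_bd
  have habs_lb : x ≤ ‖t‖ := le_trans (le_abs_self x) (Complex.abs_re_le_norm t)
  have hx_lb1 : (ℓ - c - π + 1)/2 ≤ x := by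
    have h1 : Real.log (‖t‖) ≤ ‖t‖ - 1 :=
      Real.log_le_sub_one_of_pos habs_pos
    linarith
  have hx25 : 25 ≤ x := by linarith
  have hlogabs_nonneg : 0 ≤ Real.log (‖t‖) :=
    Real.log_nonneg (by linarith)
  have hxL : x ≤ ℓ - c := by linarith
  set lg : ℝ := Real.log ℓ with hlg_def
  have hlg1 : 1 ≤ lg := by
    rw [hlg_def, Real.le_log_iff_exp_le hl0]
    linarith
  have hlg_ub : lg ≤ ℓ/5 := by rw [hlg_def]; exact aux_log_le_div5 hl100
  have hπl : π/ℓ ≤ 1 := by rw [div_le_one hl0]; linarith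
  have hlog_ub : Real.log (‖t‖) ≤ lg + π/ℓ := by
    have h1 : ‖t‖ ≤ ℓ + π := by linarith
    have h2 : Real.log (‖t‖) ≤ Real.log (ℓ + π) :=
      Real.log_le_log habs_pos h1
    have h3 : Real.log (ℓ + π) = lg + Real.log (1 + π/ℓ) := by
      rw [hlg_def, ← Real.log_mul (ne_of_gt hl0) (by positivity)]
      congr 1
      field_simp
    have h4 : Real.log (1 + π/ℓ) ≤ π/ℓ := by
      have := Real.log_le_sub_one_of_pos (show (0:ℝ) < 1 + π/ℓ by positivity)
      linarith
    linarith
  have hx_lb : ℓ - (c + 1 + lg) ≤ x := by linarith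
  have hu2 : (c + 1 + lg)/ℓ ≤ 1/2 := by rw [div_le_iff₀ hl0]; linarith
  have hu0 : (0:ℝ) ≤ (c + 1 + lg)/ℓ := by positivity
  have hlog_lb : lg - 2*(c+1+lg)/ℓ ≤ Real.log (‖t‖) := by
    have h1 : ℓ - (c+1+lg) ≤ ‖t‖ := by linarith
    have h2 : Real.log (ℓ - (c+1+lg)) ≤ Real.log (‖t‖) :=
      Real.log_le_log (by linarith) h1
    have h3 : Real.log (ℓ - (c+1+lg)) = lg + Real.log (1 - (c+1+lg)/ℓ) := by
      rw [hlg_def, ← Real.log_mul (ne_of_gt hl0)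
        (by intro h0; rw [sub_eq_zero] at h0; rw [← h0] at hu2; norm_num at hu2)]
      congr 1
      field_simp
    have h4 : -(2*((c+1+lg)/ℓ)) ≤ Real.log (1 - (c+1+lg)/ℓ) :=
      aux_log_one_sub hu0 hu2
    have h7 : 2*((c+1+lg)/ℓ) = 2*(c+1+lg)/ℓ := by ring
    linarith
  have hxhalf : ℓ/2 ≤ x := by linarith
  have him1 : π/2 - y ≤ π/ℓ := by
    have h0 : 0 < π/2 - y := by linarith
    have h1 : Real.tan (π/2 - y) = y / x := by
      rw [Real.tan_pi_div_two_sub, htan, inv_div]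
    have h2 : π/2 - y < Real.tan (π/2 - y) := Real.lt_tan h0 (by linarith)
    rw [h1] at h2
    have h3 : y / x ≤ (π/2) / (ℓ/2) :=
      div_le_div₀ (by linarith) (by linarith) (by linarith) hxhalf
    have h4 : (π/2)/(ℓ/2) = π/ℓ := by
      rw [div_div_div_cancel_right₀]
      norm_num
    linarith
  set w : ℂ := ((Real.log R : ℝ) : ℂ) - ((lg : ℝ) : ℂ) + ((π / 2 : ℝ) : ℂ) * Complex.I
    with hw_def
  have hw_re : (t - w).re = x - (ℓ - c) + lg := by
    rw [hw_def]
    simp [Complex.sub_re, Complex.add_re, Complex.mul_re, hlogR]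
    ring
  have hw_im : (t - w).im = y - π/2 := by
    rw [hw_def]
    simp [Complex.sub_im, Complex.add_im, Complex.mul_im]
    exact hy_def.symm
  have habs_diff := Complex.norm_le_abs_re_add_abs_im (t - w)
  rw [hw_re, hw_im] at habs_diff
  have hre_eq : x - (ℓ - c) + lg = lg - Real.log (‖t‖) := by linarith
  have hkey1 : π ≤ (2*c + 4 + π) * lg := by
    have h1 : (2*c + 4 + π) ≤ (2*c + 4 + π) * lg :=
      le_mul_of_one_le_right (by linarith) hlg1
    linarith
  have hkey2 : 2*(c+1+lg) ≤ (2*c + 4 + π) * lg := by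
    have hA : 2*c + 4 ≤ (2*c+4) * lg := le_mul_of_one_le_right (by linarith) hlg1
    have hB : 2*lg ≤ π*lg := mul_le_mul_of_nonneg_right (by linarith) (by linarith)
    linarith
  have hre_abs : |x - (ℓ - c) + lg| ≤ (2*c + 4 + π) * lg / ℓ := by
    rw [hre_eq, abs_le]
    constructor
    · have h1 : π/ℓ ≤ (2*c + 4 + π) * lg / ℓ := by gcongr
      linarith
    · have h1 : 2*(c+1+lg)/ℓ ≤ (2*c + 4 + π) * lg / ℓ := by gcongr
      linarith
  have him_abs : |y - π/2| ≤ π * lg / ℓ := by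
    have h1 : π/ℓ ≤ π * lg / ℓ := by
      have : π ≤ π * lg := le_mul_of_one_le_right (le_of_lt hπ) hlg1
      gcongr
    rw [abs_le]
    constructor
    · linarith
    · have h2 : (0:ℝ) ≤ π * lg / ℓ := by positivity
      linarith
  calc ‖t - w‖ ≤ |x - (ℓ - c) + lg| + |y - π/2| := habs_diff
    _ ≤ (2*c + 4 + π) * lg / ℓ + π * lg / ℓ := by linarith
    _ ≤ (2*c + 20) * (lg / ℓ) := by
        have hql : (0:ℝ) ≤ lg / ℓ := by positivity
        have hrw : (2*c + 4 + π) * lg / ℓ + π * lg / ℓ = (2*c + 4 + 2*π) * (lg/ℓ) := by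
          ring
        rw [hrw]
        exact mul_le_mul_of_nonneg_right (by linarith) hql
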